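/- Let f : ℝⁿ → ℝ be continuously differentiable, let g : ℝⁿ → ℝᵐ be continuously differentiable with each component gᵢ convex, and let Ω = {x ∈ ℝⁿ : gᵢ(x) ≤ 0 for all i ∈ {1,…,m}}. Let x ∈ Ω, let d ∈ ℝⁿ satisfy x + α·d ∈ Ω for all α ∈ [0,1] and ∇f(x)ᵀd < 0, let s ∈ ℝⁿ, let σ, δ ∈ (0,1) and t̃ ∈ (0,1), let γ(t) = x + t·d + t²·(s − d), and let F ∈ ℝ satisfy F ≥ f(x) (for instance F = max over a finite memory window of past objective values including f(x)). Assume that either s = d, or gᵢ(x + s) ≤ 0 for every index i with gᵢ(x + t̃·d) = 0. Then the non-monotone Armijo-type curve search terminates finitely: there exists h ∈ ℕ such that γ(δ^h) ∈ Ω and f(γ(δ^h)) ≤ F + σ·δ^h·∇f(x)ᵀd. Moreover, letting h* be the least such h and t* = δ^{h*}, either t* = 1, or γ(t*/δ) ∉ Ω, or f(γ(t*/δ)) > F + σ·(t*/δ)·∇f(x)ᵀd. -/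

import Mathlib

open Filter Topology

set_option maxHeartbeats 1000000 in
/-- finite termination of the non-monotone Armijo-type curve search, where the
reference value `F` satisfies `F ≥ f(x)`, and characterization of the returned stepsize. -/
theorem stmt_7 {n m : ℕ}
    (f : EuclideanSpace ℝ (Fin n) → ℝ) (hf : ContDiff ℝ 1 f)
    (g : EuclideanSpace ℝ (Fin n) → Fin m → ℝ)
    (hg_smooth : ∀ i, ContDiff ℝ 1 (fun y => g y i))
    (hg_conv : ∀ i, ConvexOn ℝ Set.univ (fun y => g y i))
    (x d s : EuclideanSpace ℝ (Fin n))
    (hx : ∀ i, g x i ≤ 0)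
    (hd_feas : ∀ α ∈ Set.Icc (0 : ℝ) 1, ∀ i, g (x + α • d) i ≤ 0)
    (hd_desc : fderiv ℝ f x d < 0)
    (σ δ : ℝ) (hσ : σ ∈ Set.Ioo (0 : ℝ) 1) (hδ : δ ∈ Set.Ioo (0 : ℝ) 1)
    (ttil : ℝ) (httil : ttil ∈ Set.Ioo (0 : ℝ) 1)
    (γ : ℝ → EuclideanSpace ℝ (Fin n))
    (hγ : ∀ t, γ t = x + t • d + t ^ 2 • (s - d))
    (F : ℝ) (hF : f x ≤ F)
    (hsd : s = d ∨ ∀ i, g (x + ttil • d) i = 0 → g (x + s) i ≤ 0) :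
    (∃ h : ℕ, (∀ i, g (γ (δ ^ h)) i ≤ 0) ∧
        f (γ (δ ^ h)) ≤ F + σ * δ ^ h * fderiv ℝ f x d) ∧
    (∀ hstar : ℕ,
      ((∀ i, g (γ (δ ^ hstar)) i ≤ 0) ∧
        f (γ (δ ^ hstar)) ≤ F + σ * δ ^ hstar * fderiv ℝ f x d) →
      (∀ h' < hstar, ¬ ((∀ i, g (γ (δ ^ h')) i ≤ 0) ∧
        f (γ (δ ^ h')) ≤ F + σ * δ ^ h' * fderiv ℝ f x d)) →
      (δ ^ hstar = 1 ∨ (∃ i, 0 < g (γ (δ ^ hstar / δ)) i) ∨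
        f (γ (δ ^ hstar / δ)) > F + σ * (δ ^ hstar / δ) * fderiv ℝ f x d)) := by
  obtain ⟨hσ0, hσ1⟩ := hσ
  obtain ⟨hδ0, hδ1⟩ := hδ
  obtain ⟨ht0, ht1⟩ := httil
  have hγ' : γ = fun t => x + t • d + t ^ 2 • (s - d) := funext hγ
  subst hγ'
  set L := fderiv ℝ f x d with hLdef
  have h01 : Set.Ioo (0 : ℝ) 1 ∈ 𝓝[>] (0 : ℝ) :=
    Ioo_mem_nhdsGT_of_mem ⟨le_refl _, one_pos⟩
  -- derivative of f along the curve at 0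
  have hfd : HasDerivAt (fun t : ℝ => f (x + t • d + t ^ 2 • (s - d))) L 0 := by
    have h1 : HasDerivAt (fun t : ℝ => x + t • d + t ^ 2 • (s - d)) d 0 := by
      have := ((hasDerivAt_const (0 : ℝ) x).add
          ((hasDerivAt_id (0 : ℝ)).smul_const d)).add
          ((hasDerivAt_pow 2 (0 : ℝ)).smul_const (s - d))
      exact this.congr_deriv (by simp)
    have hfx : HasFDerivAt f (fderiv ℝ f x)
        ((fun t : ℝ => x + t • d + t ^ 2 • (s - d)) 0) := by
      simpa using (hf.differentiable one_ne_zero x).hasFDerivAt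
    exact hfx.comp_hasDerivAt 0 h1
  -- Armijo condition holds eventually
  have hArm : ∀ᶠ t in 𝓝[>] (0 : ℝ),
      f (x + t • d + t ^ 2 • (s - d)) ≤ F + σ * t * L := by
    have hmono : 𝓝[>] (0 : ℝ) ≤ 𝓝[≠] (0 : ℝ) :=
      nhdsWithin_mono 0 fun t ht => ne_of_gt ht
    have hslope := (hasDerivAt_iff_tendsto_slope.mp hfd).mono_left hmono
    have hLσ : L < σ * L := by nlinarith
    have h1 := hslope.eventually_lt_const hLσ
    filter_upwards [h1, self_mem_nhdsWithin] with t hts ht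
    have ht' : (0 : ℝ) < t := ht
    rw [slope_def_field] at hts
    simp only [zero_smul, add_zero, ne_eq, OfNat.ofNat_ne_zero, not_false_eq_true,
      zero_pow, sub_zero] at hts
    have h2 : f (x + t • d + t ^ 2 • (s - d)) - f x < σ * L * t :=
      (div_lt_iff₀ ht').mp hts
    nlinarith
  -- feasibility holds eventually
  have hFeas : ∀ᶠ t in 𝓝[>] (0 : ℝ), ∀ i, g (x + t • d + t ^ 2 • (s - d)) i ≤ 0 := by
    rcases hsd with rfl | hsd
    · filter_upwards [h01] with t ht i
      have := hd_feas t ⟨ht.1.le, ht.2.le⟩ i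
      simpa using this
    · rw [eventually_all]
      intro i
      -- generic convexity decomposition for t ∈ (0,1)
      have hdecomp : ∀ t ∈ Set.Ioo (0 : ℝ) 1,
          g (x + t • d + t ^ 2 • (s - d)) i ≤
            (1 - t ^ 2) * g (x + (t / (1 + t)) • d) i + t ^ 2 * g (x + s) i := by
        intro t ht
        have h1t : (0 : ℝ) < 1 + t := by linarith [ht.1]
        have hvec : x + t • d + t ^ 2 • (s - d)
            = (1 - t ^ 2) • (x + (t / (1 + t)) • d) + t ^ 2 • (x + s) := by
          match_scalars <;> field_simp <;> ring
        have hcoef1 : (0 : ℝ) ≤ 1 - t ^ 2 := by nlinarith [ht.1, ht.2]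
        have := (hg_conv i).2 (Set.mem_univ (x + (t / (1 + t)) • d))
          (Set.mem_univ (x + s)) hcoef1 (sq_nonneg t) (by ring)
        rw [hvec]
        simpa [smul_eq_mul] using this
      by_cases hB : g (x + s) i ≤ 0
      · filter_upwards [h01] with t ht
        have h1t : (0 : ℝ) < 1 + t := by linarith [ht.1]
        have hc0 : (0 : ℝ) ≤ t / (1 + t) := div_nonneg ht.1.le h1t.le
        have hc1 : t / (1 + t) ≤ 1 := by
          rw [div_le_one h1t]; linarith
        have hgc := hd_feas (t / (1 + t)) ⟨hc0, hc1⟩ i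
        have hcoef1 : (0 : ℝ) ≤ 1 - t ^ 2 := by nlinarith [ht.1, ht.2]
        have := hdecomp t ht
        nlinarith [mul_nonneg hcoef1 (neg_nonneg.mpr hgc),
          mul_nonneg (sq_nonneg t) (neg_nonneg.mpr hB)]
      · -- then the constraint is inactive at x + ttil • d
        push_neg at hB
        have hA : g (x + ttil • d) i < 0 := by
          rcases lt_or_eq_of_le (hd_feas ttil ⟨ht0.le, ht1.le⟩ i) with h | h
          · exact h
          · exact absurd (hsd i h) (not_le.mpr hB)
        set A := g (x + ttil • d) i with hAdef
        set B := g (x + s) i with hBdef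
        -- eventually the bracket is negative
        have hcontf : Continuous fun t : ℝ => (1 - t) * A / ttil + t * B :=
          ((((continuous_const.sub continuous_id).mul continuous_const).div_const ttil).add
            (continuous_id.mul continuous_const))
        have hval : (1 - 0) * A / ttil + 0 * B < 0 := by
          simpa using div_neg_of_neg_of_pos hA ht0
        have hev : ∀ᶠ t in 𝓝 (0 : ℝ), (1 - t) * A / ttil + t * B < 0 :=
          (hcontf.tendsto 0).eventually_lt_const hval
        have h0t : Set.Ioo (0 : ℝ) ttil ∈ 𝓝[>] (0 : ℝ) :=
          Ioo_mem_nhdsGT_of_mem ⟨le_refl _, ht0⟩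
        filter_upwards [h01, h0t, hev.filter_mono nhdsWithin_le_nhds] with t ht htt hbr
        have h1t : (0 : ℝ) < 1 + t := by linarith [ht.1]
        have hc0 : (0 : ℝ) ≤ t / (1 + t) := div_nonneg ht.1.le h1t.le
        have hc1 : t / (1 + t) ≤ 1 := by rw [div_le_one h1t]; linarith
        have hcT : t / (1 + t) < ttil := by
          have : t / (1 + t) ≤ t := by
            rw [div_le_iff₀ h1t]; nlinarith [ht.1]
          linarith [htt.2]
        -- second convexity decomposition along the segment [x, x + ttil • d]
        have hr0 : (0 : ℝ) ≤ (t / (1 + t)) / ttil := div_nonneg hc0 ht0.le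
        have hr1 : (t / (1 + t)) / ttil ≤ 1 := by
          rw [div_le_one ht0]; linarith
        have hvec2 : x + (t / (1 + t)) • d
            = (1 - (t / (1 + t)) / ttil) • x + ((t / (1 + t)) / ttil) • (x + ttil • d) := by
          match_scalars <;> field_simp <;> ring
        have hconv2 := (hg_conv i).2 (Set.mem_univ x) (Set.mem_univ (x + ttil • d))
          (by linarith : (0:ℝ) ≤ 1 - (t / (1 + t)) / ttil) hr0 (by ring)
        rw [← hvec2] at hconv2
        simp only [smul_eq_mul] at hconv2
        have hgc : g (x + (t / (1 + t)) • d) i ≤ ((t / (1 + t)) / ttil) * A := by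
          have hx0 := hx i
          nlinarith [mul_nonneg (by linarith : (0:ℝ) ≤ 1 - (t / (1 + t)) / ttil)
            (neg_nonneg.mpr hx0)]
        have hcoef1 : (0 : ℝ) ≤ 1 - t ^ 2 := by nlinarith [ht.1, ht.2]
        have hmain := hdecomp t ht
        have hkey : (1 - t ^ 2) * ((t / (1 + t)) / ttil) = t * (1 - t) / ttil := by
          field_simp
          ring
        have h3 : (1 - t ^ 2) * g (x + (t / (1 + t)) • d) i
            ≤ (1 - t ^ 2) * (((t / (1 + t)) / ttil) * A) :=
          mul_le_mul_of_nonneg_left hgc hcoef1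
        have h4 : (1 - t ^ 2) * (((t / (1 + t)) / ttil) * A) + t ^ 2 * B
            = t * ((1 - t) * A / ttil + t * B) := by
          rw [show (1 - t ^ 2) * (((t / (1 + t)) / ttil) * A)
              = ((1 - t ^ 2) * ((t / (1 + t)) / ttil)) * A by ring, hkey]
          ring
        have h5 : t * ((1 - t) * A / ttil + t * B) ≤ 0 :=
          mul_nonpos_of_nonneg_of_nonpos ht.1.le hbr.le
        linarith
  constructor
  · have hpow : Tendsto (fun h : ℕ => δ ^ h) atTop (𝓝[>] (0 : ℝ)) := by
      apply tendsto_nhdsWithin_of_tendsto_nhds_of_eventually_within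
      · exact tendsto_pow_atTop_nhds_zero_of_lt_one hδ0.le hδ1
      · exact Eventually.of_forall fun h => pow_pos hδ0 h
    obtain ⟨h, hh⟩ := (hpow.eventually (hFeas.and hArm)).exists
    exact ⟨h, hh.1, hh.2⟩
  · intro hstar _ hmin
    rcases Nat.eq_zero_or_pos hstar with rfl | hpos
    · left; simp
    · obtain ⟨k, rfl⟩ : ∃ k, hstar = k + 1 := ⟨hstar - 1, (Nat.succ_pred_eq_of_pos hpos).symm⟩
      have hk := hmin k (Nat.lt_succ_self k)
      have hδk : δ ^ (k + 1) / δ = δ ^ k := by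
        rw [pow_succ]
        field_simp
      rw [hδk]
      rw [not_and_or] at hk
      rcases hk with h1 | h2
      · right; left
        push_neg at h1
        exact h1
      · right; right
        exact lt_of_not_ge h2
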